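/- Let c : Fin n → ℝ, suppose the set T of admissible triples is nonempty, and let e* ∈ T satisfy ∑_{j} c j · (x_{e*})_j ≤ ∑_{j} c j · (x_e)_j for every e ∈ T. Then x_{e*} ∈ S(A, b) and ∑_{j} c j · (x_{e*})_j ≤ ∑_{j} c j · x j for every x ∈ S(A, b); that is, x_{e*} is a global optimal solution of the problem of minimizing cᵀx over S(A, b). -/

import Mathlib

open Finset

variable {n : ℕ}

/-- max_{j} min{A i j, x i, x j} -/
noncomputable def maxmin (hn : 0 < n) (A : Fin n → Fin n → ℝ) (x : Fin n → ℝ) (i : Fin n) : ℝ :=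
  Finset.univ.sup' (Finset.univ_nonempty_iff.mpr (Fin.pos_iff_nonempty.mp hn))
    (fun j => min (A i j) (min (x i) (x j)))

def inBox (x : Fin n → ℝ) : Prop := ∀ j, x j ∈ Set.Icc (0:ℝ) 1

/-- S(aᵢ, bᵢ) -/
noncomputable def SeqSet (hn : 0 < n) (A : Fin n → Fin n → ℝ) (b : Fin n → ℝ) (i : Fin n) :
    Set (Fin n → ℝ) :=
  {x | inBox x ∧ maxmin hn A x i = b i}

/-- S(A, b) -/
noncomputable def SallSet (hn : 0 < n) (A : Fin n → Fin n → ℝ) (b : Fin n → ℝ) :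
    Set (Fin n → ℝ) :=
  {x | inBox x ∧ ∀ i, maxmin hn A x i = b i}

/-- X̄(i) = X̄(i,1) -/
noncomputable def Xbar1 (b : Fin n → ℝ) (i : Fin n) : Fin n → ℝ :=
  fun j => if j = i then b i else 1

/-- X̲(i) -/
noncomputable def Xund0 (b : Fin n → ℝ) (i : Fin n) : Fin n → ℝ :=
  fun j => if j = i then b i else 0

/-- X̄(i,2) -/
noncomputable def Xbar2 (A : Fin n → Fin n → ℝ) (b : Fin n → ℝ) (i : Fin n) : Fin n → ℝ :=
  fun j => if A i j > b i then b i else 1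

/-- X̲(i,j) -/
noncomputable def XundJ (b : Fin n → ℝ) (i j : Fin n) : Fin n → ℝ :=
  fun k => if k = i ∨ k = j then b i else 0

noncomputable def I1set (A : Fin n → Fin n → ℝ) (b : Fin n → ℝ) : Finset (Fin n) :=
  Finset.univ.filter (fun i => A i i > b i)

noncomputable def I2set (A : Fin n → Fin n → ℝ) (b : Fin n → ℝ) : Finset (Fin n) :=
  Finset.univ.filter (fun i => A i i = b i)

noncomputable def I3set (A : Fin n → Fin n → ℝ) (b : Fin n → ℝ) : Finset (Fin n) :=
  Finset.univ.filter (fun i => A i i < b i)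

/-- componentwise max over an index set, zero vector when empty -/
noncomputable def vsup (s : Finset (Fin n)) (f : Fin n → Fin n → ℝ) : Fin n → ℝ :=
  fun j => if h : s.Nonempty then s.sup' h (fun i => f i j) else 0

/-- componentwise min over an index set, all-ones vector when empty -/
noncomputable def vinf (s : Finset (Fin n)) (f : Fin n → Fin n → ℝ) : Fin n → ℝ :=
  fun j => if h : s.Nonempty then s.inf' h (fun i => f i j) else 1

noncomputable def X1lo (A : Fin n → Fin n → ℝ) (b : Fin n → ℝ) : Fin n → ℝ :=
  vsup (I1set A b) (Xund0 b)

noncomputable def X1hi (A : Fin n → Fin n → ℝ) (b : Fin n → ℝ) : Fin n → ℝ :=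
  vinf (I1set A b) (Xbar1 b)

noncomputable def X2lo (A : Fin n → Fin n → ℝ) (b : Fin n → ℝ) : Fin n → ℝ :=
  vsup (I2set A b) (Xund0 b)

/-- X̄(i,t) for t ∈ {1,2} -/
noncomputable def Xsel (A : Fin n → Fin n → ℝ) (b : Fin n → ℝ) (t : ℕ) (i : Fin n) : Fin n → ℝ :=
  if t = 1 then Xbar1 b i else Xbar2 A b i

noncomputable def X2hi (A : Fin n → Fin n → ℝ) (b : Fin n → ℝ) (e' : Fin n → ℕ) : Fin n → ℝ :=
  vinf (I2set A b) (fun i => Xsel A b (e' i) i)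

noncomputable def X3lo (A : Fin n → Fin n → ℝ) (b : Fin n → ℝ) (el : Fin n → Fin n) : Fin n → ℝ :=
  vsup (I3set A b) (fun i => XundJ b i (el i))

noncomputable def X3hi (A : Fin n → Fin n → ℝ) (b : Fin n → ℝ) (e'' : Fin n → ℕ) : Fin n → ℝ :=
  vinf (I3set A b) (fun i => Xsel A b (e'' i) i)

/-- membership of e̲ in E̲ : e̲(i) ∈ J_i for all i ∈ I₃ -/
def memEund (A : Fin n → Fin n → ℝ) (b : Fin n → ℝ) (el : Fin n → Fin n) : Prop :=
  ∀ i, A i i < b i → b i ≤ A i (el i)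

/-- membership of e' in E' -/
def memE' (A : Fin n → Fin n → ℝ) (b : Fin n → ℝ) (e' : Fin n → ℕ) : Prop :=
  ∀ i, A i i = b i → e' i = 1 ∨ e' i = 2

/-- membership of e'' in E'' -/
def memE'' (A : Fin n → Fin n → ℝ) (b : Fin n → ℝ) (e'' : Fin n → ℕ) : Prop :=
  ∀ i, A i i < b i → e'' i = 1 ∨ e'' i = 2

noncomputable def lowVec (A : Fin n → Fin n → ℝ) (b : Fin n → ℝ) (el : Fin n → Fin n) :
    Fin n → ℝ :=
  fun j => max (X1lo A b j) (max (X2lo A b j) (X3lo A b el j))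

noncomputable def hiVec (A : Fin n → Fin n → ℝ) (b : Fin n → ℝ) (e' e'' : Fin n → ℕ) :
    Fin n → ℝ :=
  fun j => min (X1hi A b j) (min (X2hi A b e' j) (X3hi A b e'' j))

/-- admissibility of a triple -/
noncomputable def Admissible (A : Fin n → Fin n → ℝ) (b : Fin n → ℝ)
    (el : Fin n → Fin n) (e' e'' : Fin n → ℕ) : Prop :=
  ∀ j, lowVec A b el j ≤ hiVec A b e' e'' j

/-- membership in T -/
noncomputable def memT (A : Fin n → Fin n → ℝ) (b : Fin n → ℝ)
    (el : Fin n → Fin n) (e' e'' : Fin n → ℕ) : Prop :=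
  memEund A b el ∧ memE' A b e' ∧ memE'' A b e'' ∧ Admissible A b el e' e''

noncomputable def xe (A : Fin n → Fin n → ℝ) (b : Fin n → ℝ) (c : Fin n → ℝ)
    (el : Fin n → Fin n) (e' e'' : Fin n → ℕ) : Fin n → ℝ :=
  fun j => if 0 ≤ c j then lowVec A b el j else hiVec A b e' e'' j

section AuxLemmas

variable {n : ℕ}

lemma le_vsup' {s : Finset (Fin n)} {f : Fin n → Fin n → ℝ} {i j : Fin n} (hi : i ∈ s) :
    f i j ≤ vsup s f j := by
  have hs : s.Nonempty := ⟨i, hi⟩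
  simp only [vsup, dif_pos hs]
  exact Finset.le_sup' (fun i => f i j) hi

lemma vsup_le' {s : Finset (Fin n)} {f : Fin n → Fin n → ℝ} {j : Fin n} {y : ℝ}
    (h0 : 0 ≤ y) (h : ∀ i ∈ s, f i j ≤ y) : vsup s f j ≤ y := by
  by_cases hs : s.Nonempty
  · simp only [vsup, dif_pos hs]
    exact Finset.sup'_le hs _ h
  · simp only [vsup, dif_neg hs]
    exact h0

lemma vinf_le' {s : Finset (Fin n)} {f : Fin n → Fin n → ℝ} {i j : Fin n} (hi : i ∈ s) :
    vinf s f j ≤ f i j := by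
  have hs : s.Nonempty := ⟨i, hi⟩
  simp only [vinf, dif_pos hs]
  exact Finset.inf'_le (fun i => f i j) hi

lemma le_vinf' {s : Finset (Fin n)} {f : Fin n → Fin n → ℝ} {j : Fin n} {y : ℝ}
    (h1 : y ≤ 1) (h : ∀ i ∈ s, y ≤ f i j) : y ≤ vinf s f j := by
  by_cases hs : s.Nonempty
  · simp only [vinf, dif_pos hs]
    exact Finset.le_inf' hs _ h
  · simp only [vinf, dif_neg hs]
    exact h1

lemma vsup_nonneg' {s : Finset (Fin n)} {f : Fin n → Fin n → ℝ} {j : Fin n}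
    (h : ∀ i ∈ s, 0 ≤ f i j) : 0 ≤ vsup s f j := by
  by_cases hs : s.Nonempty
  · obtain ⟨i, hi⟩ := hs
    exact le_trans (h i hi) (le_vsup' hi)
  · simp [vsup, dif_neg hs]

lemma vinf_le_one' {s : Finset (Fin n)} {f : Fin n → Fin n → ℝ} {j : Fin n}
    (h : ∀ i ∈ s, f i j ≤ 1) : vinf s f j ≤ 1 := by
  by_cases hs : s.Nonempty
  · obtain ⟨i, hi⟩ := hs
    exact le_trans (vinf_le' hi) (h i hi)
  · simp [vinf, dif_neg hs]

lemma lowVec_nonneg {A : Fin n → Fin n → ℝ} {b : Fin n → ℝ}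
    (hb : ∀ i, b i ∈ Set.Icc (0:ℝ) 1) (el : Fin n → Fin n) (j : Fin n) :
    0 ≤ lowVec A b el j := by
  refine le_trans ?_ (le_max_left _ _)
  apply vsup_nonneg'
  intro i _
  simp only [Xund0]
  split_ifs
  · exact (hb i).1
  · exact le_refl 0

lemma hiVec_le_one {A : Fin n → Fin n → ℝ} {b : Fin n → ℝ}
    (hb : ∀ i, b i ∈ Set.Icc (0:ℝ) 1) (e' e'' : Fin n → ℕ) (j : Fin n) :
    hiVec A b e' e'' j ≤ 1 := by
  refine le_trans (min_le_left _ _) ?_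
  apply vinf_le_one'
  intro i _
  simp only [Xbar1]
  split_ifs
  · exact (hb i).2
  · exact le_refl 1

lemma mem_Sall_of_between (hn : 0 < n) (A : Fin n → Fin n → ℝ) (b : Fin n → ℝ)
    (hb : ∀ i, b i ∈ Set.Icc (0:ℝ) 1)
    (el : Fin n → Fin n) (e' e'' : Fin n → ℕ)
    (hel : memEund A b el) (he' : memE' A b e') (he'' : memE'' A b e'')
    (x : Fin n → ℝ)
    (hlo : ∀ j, lowVec A b el j ≤ x j) (hhi : ∀ j, x j ≤ hiVec A b e' e'' j) :
    x ∈ SallSet hn A b := by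
  have hx0 : ∀ j, 0 ≤ x j := fun j => le_trans (lowVec_nonneg hb el j) (hlo j)
  have hx1 : ∀ j, x j ≤ 1 := fun j => le_trans (hhi j) (hiVec_le_one hb e' e'' j)
  -- lower bounds from lowVec
  have hbix : ∀ i, b i ≤ x i := by
    intro i
    rcases lt_trichotomy (A i i) (b i) with h | h | h
    · have hi3 : i ∈ I3set A b := by simp [I3set, h]
      have h1 : b i ≤ X3lo A b el i := by
        have := le_vsup' (f := fun i => XundJ b i (el i)) (j := i) hi3
        simpa [XundJ, X3lo] using this
      exact le_trans (le_trans h1 (le_trans (le_max_right _ _) (le_max_right _ _))) (hlo i)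
    · have hi2 : i ∈ I2set A b := by simp [I2set, h]
      have h1 : b i ≤ X2lo A b i := by
        have := le_vsup' (f := Xund0 b) (j := i) hi2
        simpa [Xund0, X2lo] using this
      exact le_trans (le_trans h1 (le_trans (le_max_left _ _) (le_max_right _ _))) (hlo i)
    · have hi1 : i ∈ I1set A b := by simp [I1set, h]
      have h1 : b i ≤ X1lo A b i := by
        have := le_vsup' (f := Xund0 b) (j := i) hi1
        simpa [Xund0, X1lo] using this
      exact le_trans (le_trans h1 (le_max_left _ _)) (hlo i)
  have hxel : ∀ i, A i i < b i → b i ≤ x (el i) := by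
    intro i h
    have hi3 : i ∈ I3set A b := by simp [I3set, h]
    have h1 : b i ≤ X3lo A b el (el i) := by
      have := le_vsup' (f := fun i => XundJ b i (el i)) (j := el i) hi3
      simpa [XundJ, X3lo] using this
    exact le_trans (le_trans h1 (le_trans (le_max_right _ _) (le_max_right _ _))) (hlo (el i))
  -- upper bounds from hiVec
  have hI1 : ∀ i, b i < A i i → x i ≤ b i := by
    intro i h
    have hi1 : i ∈ I1set A b := by simp [I1set, h]
    have h1 : X1hi A b i ≤ b i := by
      have := vinf_le' (f := Xbar1 b) (j := i) hi1
      simpa [Xbar1, X1hi] using this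
    exact le_trans (hhi i) (le_trans (min_le_left _ _) h1)
  have hSel1 : ∀ i j, Xsel A b 1 i j = Xbar1 b i j := by
    intro i j; simp [Xsel]
  have hSel2 : ∀ i j, Xsel A b 2 i j = Xbar2 A b i j := by
    intro i j; simp [Xsel]
  have hI2a : ∀ i, A i i = b i → e' i = 1 → x i ≤ b i := by
    intro i h h1
    have hi2 : i ∈ I2set A b := by simp [I2set, h]
    have h2 : X2hi A b e' i ≤ b i := by
      unfold X2hi
      have := vinf_le' (f := fun i => Xsel A b (e' i) i) (j := i) hi2
      simp only [h1, hSel1] at this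
      simpa [Xbar1] using this
    exact le_trans (hhi i) (le_trans (min_le_right _ _) (le_trans (min_le_left _ _) h2))
  have hI2b : ∀ i j, A i i = b i → e' i = 2 → b i < A i j → x j ≤ b i := by
    intro i j h h2 hij
    have hi2 : i ∈ I2set A b := by simp [I2set, h]
    have h3 : X2hi A b e' j ≤ b i := by
      unfold X2hi
      have := vinf_le' (f := fun i => Xsel A b (e' i) i) (j := j) hi2
      simp only [h2, hSel2] at this
      simpa [Xbar2, hij] using this
    exact le_trans (hhi j) (le_trans (min_le_right _ _) (le_trans (min_le_left _ _) h3))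
  have hI3a : ∀ i, A i i < b i → e'' i = 1 → x i ≤ b i := by
    intro i h h1
    have hi3 : i ∈ I3set A b := by simp [I3set, h]
    have h2 : X3hi A b e'' i ≤ b i := by
      unfold X3hi
      have := vinf_le' (f := fun i => Xsel A b (e'' i) i) (j := i) hi3
      simp only [h1, hSel1] at this
      simpa [Xbar1] using this
    exact le_trans (hhi i) (le_trans (min_le_right _ _) (le_trans (min_le_right _ _) h2))
  have hI3b : ∀ i j, A i i < b i → e'' i = 2 → b i < A i j → x j ≤ b i := by
    intro i j h h2 hij
    have hi3 : i ∈ I3set A b := by simp [I3set, h]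
    have h3 : X3hi A b e'' j ≤ b i := by
      unfold X3hi
      have := vinf_le' (f := fun i => Xsel A b (e'' i) i) (j := j) hi3
      simp only [h2, hSel2] at this
      simpa [Xbar2, hij] using this
    exact le_trans (hhi j) (le_trans (min_le_right _ _) (le_trans (min_le_right _ _) h3))
  refine ⟨fun j => ⟨hx0 j, hx1 j⟩, fun i => ?_⟩
  unfold maxmin
  apply le_antisymm
  · apply Finset.sup'_le
    intro j _
    by_cases hAij : A i j ≤ b i
    · exact le_trans (min_le_left _ _) hAij
    · push_neg at hAij
      rcases lt_trichotomy (A i i) (b i) with h | h | h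
      · rcases he'' i h with h1 | h1
        · exact le_trans (le_trans (min_le_right _ _) (min_le_left _ _)) (hI3a i h h1)
        · exact le_trans (le_trans (min_le_right _ _) (min_le_right _ _)) (hI3b i j h h1 hAij)
      · rcases he' i h with h1 | h1
        · exact le_trans (le_trans (min_le_right _ _) (min_le_left _ _)) (hI2a i h h1)
        · exact le_trans (le_trans (min_le_right _ _) (min_le_right _ _)) (hI2b i j h h1 hAij)
      · exact le_trans (le_trans (min_le_right _ _) (min_le_left _ _)) (hI1 i h)
  · rcases lt_trichotomy (A i i) (b i) with h | h | h
    · refine le_trans ?_ (Finset.le_sup' _ (Finset.mem_univ (el i)))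
      exact le_min (hel i h) (le_min (hbix i) (hxel i h))
    · refine le_trans ?_ (Finset.le_sup' _ (Finset.mem_univ i))
      exact le_min (le_of_eq h.symm) (le_min (hbix i) (hbix i))
    · refine le_trans ?_ (Finset.le_sup' _ (Finset.mem_univ i))
      exact le_min (le_of_lt h) (le_min (hbix i) (hbix i))

lemma exists_triple_of_mem (hn : 0 < n) (A : Fin n → Fin n → ℝ) (b : Fin n → ℝ)
    (x : Fin n → ℝ) (hx : x ∈ SallSet hn A b) :
    ∃ el e' e'', memT A b el e' e'' ∧
      (∀ j, lowVec A b el j ≤ x j) ∧ (∀ j, x j ≤ hiVec A b e' e'' j) := by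
  classical
  obtain ⟨hbox, heq⟩ := hx
  unfold maxmin at heq
  have hne : (Finset.univ : Finset (Fin n)).Nonempty :=
    Finset.univ_nonempty_iff.mpr (Fin.pos_iff_nonempty.mp hn)
  have hw : ∀ i, ∃ j, b i ≤ A i j ∧ b i ≤ x i ∧ b i ≤ x j := by
    intro i
    obtain ⟨j, _, hj⟩ :=
      Finset.exists_mem_eq_sup' hne (fun j => min (A i j) (min (x i) (x j)))
    have hj2 : min (A i j) (min (x i) (x j)) = b i := by
      rw [← hj]
      exact heq i
    refine ⟨j, ?_, ?_, ?_⟩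
    · rw [← hj2]; exact min_le_left _ _
    · rw [← hj2]; exact le_trans (min_le_right _ _) (min_le_left _ _)
    · rw [← hj2]; exact le_trans (min_le_right _ _) (min_le_right _ _)
  choose el hel using hw
  have hxi : ∀ i, b i ≤ x i := fun i => (hel i).2.1
  have hub : ∀ i j, min (A i j) (min (x i) (x j)) ≤ b i := by
    intro i j
    rw [← heq i]
    exact Finset.le_sup' (fun j => min (A i j) (min (x i) (x j))) (Finset.mem_univ j)
  set E : Fin n → ℕ := fun i => if x i ≤ b i then 1 else 2 with hEdef
  have hXsel : ∀ i j : Fin n, x j ≤ Xsel A b (E i) i j := by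
    intro i j
    by_cases hxi' : x i ≤ b i
    · have hE : E i = 1 := if_pos hxi'
      rw [hE, show Xsel A b 1 i = Xbar1 b i from by simp [Xsel]]
      simp only [Xbar1]
      split_ifs with h
      · subst h; exact hxi'
      · exact (hbox j).2
    · have hE : E i = 2 := if_neg hxi'
      rw [hE, show Xsel A b 2 i = Xbar2 A b i from by simp [Xsel]]
      simp only [Xbar2]
      split_ifs with h
      · push_neg at hxi'
        by_contra hxj
        push_neg at hxj
        have h1 := hub i j
        have h2 : b i < min (A i j) (min (x i) (x j)) := lt_min h (lt_min hxi' hxj)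
        linarith
      · exact (hbox j).2
  have hlo : ∀ j, lowVec A b el j ≤ x j := by
    intro j
    have h1 : X1lo A b j ≤ x j := by
      apply vsup_le' (hbox j).1
      intro i _
      simp only [Xund0]
      split_ifs with h
      · subst h; exact hxi j
      · exact (hbox j).1
    have h2 : X2lo A b j ≤ x j := by
      apply vsup_le' (hbox j).1
      intro i _
      simp only [Xund0]
      split_ifs with h
      · subst h; exact hxi j
      · exact (hbox j).1
    have h3 : X3lo A b el j ≤ x j := by
      apply vsup_le' (hbox j).1
      intro i _
      simp only [XundJ]
      split_ifs with h
      · rcases h with h | h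
        · subst h; exact hxi j
        · subst h; exact (hel i).2.2
      · exact (hbox j).1
    exact max_le h1 (max_le h2 h3)
  have hhi : ∀ j, x j ≤ hiVec A b E E j := by
    intro j
    have h1 : x j ≤ X1hi A b j := by
      apply le_vinf' (hbox j).2
      intro i hi
      simp only [I1set, Finset.mem_filter] at hi
      simp only [Xbar1]
      split_ifs with h
      · subst h
        have h1 := hub j j
        simp only [min_self] at h1
        rcases min_le_iff.mp h1 with h' | h'
        · linarith [hi.2]
        · exact h'
      · exact (hbox j).2
    have h2 : x j ≤ X2hi A b E j := by
      unfold X2hi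
      apply le_vinf' (hbox j).2
      intro i _
      exact hXsel i j
    have h3 : x j ≤ X3hi A b E j := by
      unfold X3hi
      apply le_vinf' (hbox j).2
      intro i _
      exact hXsel i j
    exact le_min h1 (le_min h2 h3)
  refine ⟨el, E, E, ⟨fun i h => (hel i).1, ?_, ?_, fun j => le_trans (hlo j) (hhi j)⟩, hlo, hhi⟩
  · intro i _
    by_cases h : x i ≤ b i
    · left; exact if_pos h
    · right; exact if_neg h
  · intro i _
    by_cases h : x i ≤ b i
    · left; exact if_pos h
    · right; exact if_neg h

end AuxLemmas

theorem stmt17 (n : ℕ) (hn : 0 < n) (A : Fin n → Fin n → ℝ) (b : Fin n → ℝ)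
    (hA : ∀ i j, A i j ∈ Set.Icc (0:ℝ) 1) (hb : ∀ i, b i ∈ Set.Icc (0:ℝ) 1)
    (c : Fin n → ℝ) (elₒ : Fin n → Fin n) (e'ₒ e''ₒ : Fin n → ℕ)
    (hstar : memT A b elₒ e'ₒ e''ₒ)
    (hopt : ∀ el e' e'', memT A b el e' e'' →
      ∑ j, c j * xe A b c elₒ e'ₒ e''ₒ j ≤ ∑ j, c j * xe A b c el e' e'' j) :
    xe A b c elₒ e'ₒ e''ₒ ∈ SallSet hn A b ∧
      ∀ x ∈ SallSet hn A b,
        ∑ j, c j * xe A b c elₒ e'ₒ e''ₒ j ≤ ∑ j, c j * x j := by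
  obtain ⟨helₒ, he'ₒ, he''ₒ, hadm⟩ := hstar
  have hlo : ∀ j, lowVec A b elₒ j ≤ xe A b c elₒ e'ₒ e''ₒ j := by
    intro j
    simp only [xe]
    split_ifs
    · exact le_refl _
    · exact hadm j
  have hhi : ∀ j, xe A b c elₒ e'ₒ e''ₒ j ≤ hiVec A b e'ₒ e''ₒ j := by
    intro j
    simp only [xe]
    split_ifs
    · exact hadm j
    · exact le_refl _
  refine ⟨mem_Sall_of_between hn A b hb elₒ e'ₒ e''ₒ helₒ he'ₒ he''ₒ _ hlo hhi, ?_⟩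
  intro x hx
  obtain ⟨el, e', e'', hT, hlo', hhi'⟩ := exists_triple_of_mem hn A b x hx
  refine le_trans (hopt el e' e'' hT) ?_
  apply Finset.sum_le_sum
  intro j _
  simp only [xe]
  rcases le_or_gt 0 (c j) with h | h
  · rw [if_pos h]
    exact mul_le_mul_of_nonneg_left (hlo' j) h
  · rw [if_neg (not_le.mpr h)]
    exact mul_le_mul_of_nonpos_left (hhi' j) h.le
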